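/- Let φ be an integer-valued monotone valuation on compact convex subsets of ℝ² and let P be a finite set of points such that φ({x}) ≥ 1 for each x ∈ P and for all distinct x, y ∈ P there exists z in the open segment (x,y) with φ({z}) = 0. If |P| ≥ 4, then φ(conv P) ≥ 2. -/

import Mathlib

open Set AffineMap

section aux

variable {E : Type*} [NormedAddCommGroup E] [NormedSpace ℝ E]

lemma segment_isCompact (x y : E) : IsCompact (segment ℝ x y) := by
  rw [segment_eq_image_lineMap]
  exact isCompact_Icc.image AffineMap.lineMap_continuous

end aux

lemma split_segment {x y z : EuclideanSpace ℝ (Fin 2)} (hxy : x ≠ y)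
    (hz : z ∈ openSegment ℝ x y) :
    segment ℝ x z ∪ segment ℝ z y = segment ℝ x y ∧
      segment ℝ x z ∩ segment ℝ z y = {z} := by
  rw [openSegment_eq_image_lineMap] at hz
  obtain ⟨t, ht, rfl⟩ := hz
  have hinj : Function.Injective (AffineMap.lineMap (k := ℝ) x y) :=
    AffineMap.lineMap_injective ℝ hxy
  have h1 : segment ℝ x (AffineMap.lineMap x y t) =
      AffineMap.lineMap x y '' Set.Icc 0 t := by
    rw [← segment_eq_Icc ht.1.le, image_segment]
    simp
  have h2 : segment ℝ (AffineMap.lineMap x y t) y =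
      AffineMap.lineMap x y '' Set.Icc t 1 := by
    rw [← segment_eq_Icc ht.2.le, image_segment]
    simp
  constructor
  · rw [h1, h2, ← Set.image_union, Set.Icc_union_Icc_eq_Icc ht.1.le ht.2.le,
      segment_eq_image_lineMap]
  · rw [h1, h2, ← Set.image_inter hinj, Set.Icc_inter_Icc]
    simp [max_eq_right ht.1.le, min_eq_left ht.2.le]

/-- If `φ` is an integer-valued monotone valuation on compact convex subsets of ℝ² and `P`
is an invisibility set (each singleton has value ≥ 1, and between any two points of `P`
there is a point of value 0) with at least 4 points, then `φ(conv P) ≥ 2`. -/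
theorem invisibility_set_lower_bound
    (φ : Set (EuclideanSpace ℝ (Fin 2)) → ℝ)
    (hint : ∀ K, ∃ m : ℤ, φ K = m)
    (hempty : φ ∅ = 0)
    (hadd : ∀ K L : Set (EuclideanSpace ℝ (Fin 2)),
      IsCompact K → Convex ℝ K → IsCompact L → Convex ℝ L → Convex ℝ (K ∪ L) →
      φ (K ∪ L) + φ (K ∩ L) = φ K + φ L)
    (hmono : ∀ K L : Set (EuclideanSpace ℝ (Fin 2)),
      IsCompact K → Convex ℝ K → IsCompact L → Convex ℝ L → K ⊆ L → φ K ≤ φ L)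
    (P : Finset (EuclideanSpace ℝ (Fin 2)))
    (hP1 : ∀ x ∈ P, (1 : ℝ) ≤ φ {x})
    (hP2 : ∀ x ∈ P, ∀ y ∈ P, x ≠ y → ∃ z ∈ openSegment ℝ x y, φ {z} = 0)
    (hcard : 4 ≤ P.card) :
    (2 : ℝ) ≤ φ (convexHull ℝ (P : Set (EuclideanSpace ℝ (Fin 2)))) := by
  obtain ⟨x, hx, y, hy, hxy⟩ := Finset.one_lt_card.mp (by omega : 1 < P.card)
  obtain ⟨z, hz, hz0⟩ := hP2 x hx y hy hxy
  obtain ⟨hu, hi⟩ := split_segment hxy hz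
  have hzs : z ∈ segment ℝ x y := openSegment_subset_segment ℝ x y hz
  have hK : IsCompact (segment ℝ x z) := segment_isCompact x z
  have hL : IsCompact (segment ℝ z y) := segment_isCompact z y
  have hKc : Convex ℝ (segment ℝ x z) := convex_segment x z
  have hLc : Convex ℝ (segment ℝ z y) := convex_segment z y
  have hUc : Convex ℝ (segment ℝ x z ∪ segment ℝ z y) := hu ▸ convex_segment x y
  have key := hadd _ _ hK hKc hL hLc hUc
  rw [hu, hi, hz0] at key
  have h1 : (1 : ℝ) ≤ φ (segment ℝ x z) := by
    refine le_trans (hP1 x hx) (hmono _ _ isCompact_singleton (convex_singleton x) hK hKc ?_)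
    simp [Set.singleton_subset_iff, left_mem_segment]
  have h2 : (1 : ℝ) ≤ φ (segment ℝ z y) := by
    refine le_trans (hP1 y hy) (hmono _ _ isCompact_singleton (convex_singleton y) hL hLc ?_)
    simp [Set.singleton_subset_iff, right_mem_segment]
  have hsub : segment ℝ x y ⊆ convexHull ℝ (P : Set (EuclideanSpace ℝ (Fin 2))) :=
    (convex_convexHull ℝ _).segment_subset (subset_convexHull ℝ _ hx)
      (subset_convexHull ℝ _ hy)
  have hfin : IsCompact (convexHull ℝ (P : Set (EuclideanSpace ℝ (Fin 2)))) :=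
    P.finite_toSet.isCompact_convexHull (𝕜 := ℝ)
  calc (2 : ℝ) ≤ φ (segment ℝ x z) + φ (segment ℝ z y) := by linarith
    _ = φ (segment ℝ x y) := by linarith
    _ ≤ φ (convexHull ℝ (P : Set (EuclideanSpace ℝ (Fin 2)))) :=
        hmono _ _ (segment_isCompact x y) (convex_segment x y) hfin
          (convex_convexHull ℝ _) hsub
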